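/- Let π be the probability measure on tempered measures with Laplace transform L_π(f) = exp(−∫_0^∞ ψ(V_s f) ds). Then π is invariant for the Markov kernel P_t with Laplace transform ∫ e^{−⟨f,ν⟩} P_t(μ,dν) = exp(−⟨V_t f, μ⟩ − ∫_0^t ψ(V_s f) ds); that is, ∫∫ e^{−⟨f,ν⟩} P_t(μ,dν) π(dμ) = L_π(f) for all t ≥ 0 and nonnegative f. -/
import Mathlib

open MeasureTheory

/-- The probability measure `π` with Laplace transform `exp(-∫_0^∞ ψ(V_s f) ds)` is
invariant for the Markov kernel `P_t`: integrating the Laplace transform of `P_t(μ,·)`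
against `π(dμ)` returns `L_π(f)`. -/
theorem invariance_of_limit_measure
    {E M : Type*} [MeasurableSpace M]
    (pair : (E → ℝ) → M → ℝ)
    (ψ : (E → ℝ) → ℝ)
    (V : ℝ → (E → ℝ) → E → ℝ)
    (hVsem : ∀ s t (f : E → ℝ), (∀ x, 0 ≤ f x) → V s (V t f) = V (s + t) f)
    (hVpos : ∀ t (f : E → ℝ), (∀ x, 0 ≤ f x) → ∀ x, 0 ≤ V t f x)
    (P : ℝ → M → Measure M) (π : Measure M) [IsProbabilityMeasure π]
    (hLap : ∀ t, 0 ≤ t → ∀ μ, ∀ f : E → ℝ, (∀ x, 0 ≤ f x) →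
      ∫ ν, Real.exp (-(pair f ν)) ∂(P t μ)
        = Real.exp (-(pair (V t f) μ) - ∫ s in (0:ℝ)..t, ψ (V s f)))
    (hπ : ∀ f : E → ℝ, (∀ x, 0 ≤ f x) →
      ∫ μ, Real.exp (-(pair f μ)) ∂π
        = Real.exp (-(∫ s in Set.Ioi (0:ℝ), ψ (V s f))))
    (hψint : ∀ f : E → ℝ, (∀ x, 0 ≤ f x) →
      IntegrableOn (fun s => ψ (V s f)) (Set.Ioi 0)) :
    ∀ t, 0 ≤ t → ∀ f : E → ℝ, (∀ x, 0 ≤ f x) →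
      ∫ μ, (∫ ν, Real.exp (-(pair f ν)) ∂(P t μ)) ∂π
        = Real.exp (-(∫ s in Set.Ioi (0:ℝ), ψ (V s f))) := by
  intro t ht f hf
  have hVtf : ∀ x, 0 ≤ V t f x := hVpos t f hf
  -- rewrite inner integral via hLap
  simp_rw [hLap t ht _ f hf, sub_eq_add_neg, Real.exp_add]
  rw [integral_mul_const, hπ (V t f) hVtf]
  -- rewrite the exponent using the semigroup property
  have hsem : (fun s => ψ (V s (V t f))) = fun s => ψ (V (s + t) f) := by
    funext s; rw [hVsem s t f hf]
  rw [show (∫ s in Set.Ioi (0:ℝ), ψ (V s (V t f)))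
      = ∫ s in Set.Ioi (0:ℝ), ψ (V (s + t) f) from by rw [hsem]]
  -- change of variables s ↦ s + t
  have hmp : MeasurePreserving (fun s : ℝ => s + t) volume volume :=
    measurePreserving_add_right volume t
  have hemb : MeasurableEmbedding (fun s : ℝ => s + t) :=
    measurableEmbedding_addRight t
  have hpre : (fun s : ℝ => s + t) ⁻¹' Set.Ioi t = Set.Ioi 0 := by
    ext s; simp [Set.mem_preimage, Set.mem_Ioi]
  have hcov : (∫ s in Set.Ioi (0:ℝ), ψ (V (s + t) f))
      = ∫ s in Set.Ioi t, ψ (V s f) := by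
    rw [← hpre]
    exact hmp.setIntegral_preimage_emb hemb (fun s => ψ (V s f)) (Set.Ioi t)
  rw [hcov]
  -- interval integral as set integral over Ioc
  rw [intervalIntegral.integral_of_le ht]
  -- combine the two pieces
  rw [← Real.exp_add]
  congr 1
  have hIoc : Set.Ioc (0:ℝ) t ⊆ Set.Ioi 0 := Set.Ioc_subset_Ioi_self
  have hIoi : Set.Ioi t ⊆ Set.Ioi (0:ℝ) := Set.Ioi_subset_Ioi ht
  have hint := hψint f hf
  have h1 : IntegrableOn (fun s => ψ (V s f)) (Set.Ioi t) := hint.mono_set hIoi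
  have h2 : IntegrableOn (fun s => ψ (V s f)) (Set.Ioc 0 t) := hint.mono_set hIoc
  have hunion : Set.Ioc (0:ℝ) t ∪ Set.Ioi t = Set.Ioi 0 := Set.Ioc_union_Ioi_eq_Ioi ht
  rw [← hunion, setIntegral_union (Set.Ioc_disjoint_Ioi le_rfl) measurableSet_Ioi h2 h1]
  ring
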